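/- Let M be a FINITE type equipped with a binary operation · and a distinguished element e, and suppose that (((e·x)·(y·z))·z)·y = x holds for all x, y, z ∈ M (formula 81R1). Then (M, ·) is a Boolean group with identity element e: the operation · is associative and commutative, e·x = x for all x, and x·x = e for all x. -/

import Mathlib

theorem finite_single_axiom_81R1
    (M : Type) [Finite M] (mul : M → M → M) (e : M)
    (h : ∀ x y z : M, mul (mul (mul (mul e x) (mul y z)) z) y = x) :
    (∀ x y z : M, mul (mul x y) z = mul x (mul y z)) ∧
    (∀ x y : M, mul x y = mul y x) ∧
    (∀ x : M, mul e x = x) ∧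
    (∀ x : M, mul x x = e) := by
  -- left multiplication by e is injective
  have hFinj : Function.Injective (mul e) := by
    intro a b hab
    have ha := h a e e
    have hb2 := h b e e
    rw [hab] at ha
    exact ha.symm.trans hb2
  have hFsurj : Function.Surjective (mul e) :=
    Finite.injective_iff_surjective.mp hFinj
  -- right multiplications are surjective, hence bijective
  have hRsurj : ∀ a : M, Function.Surjective (fun t => mul t a) := by
    intro a x
    exact ⟨mul (mul (mul e x) (mul a e)) e, h x a e⟩
  have hRinj : ∀ a : M, Function.Injective (fun t => mul t a) := by
    intro a
    exact Finite.injective_iff_surjective.mpr (hRsurj a)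
  obtain ⟨φ, hφ⟩ : ∃ φ : Equiv.Perm M, ∀ t, φ t = mul e t :=
    ⟨Equiv.ofBijective (mul e) ⟨hFinj, hFsurj⟩, fun t => rfl⟩
  obtain ⟨ρ, hρ⟩ : ∃ ρ : M → Equiv.Perm M, ∀ a t, ρ a t = mul t a :=
    ⟨fun a => Equiv.ofBijective (fun t => mul t a) ⟨hRinj a, hRsurj a⟩, fun a t => rfl⟩
  -- ρ is injective
  have ρinj : Function.Injective ρ := by
    intro a b hab
    apply hFinj
    have h1 := congrArg (fun g : Equiv.Perm M => g e) hab
    simpa [hρ] using h1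
  -- the axiom as a permutation identity
  have hA : ∀ y z : M, ρ y * ρ z * ρ (mul y z) * φ = 1 := by
    intro y z
    ext x
    simp only [Equiv.Perm.mul_apply, Equiv.Perm.one_apply, hρ, hφ]
    exact h x y z
  have hAinv : ∀ y z : M, ρ y * ρ z * ρ (mul y z) = φ⁻¹ := by
    intro y z
    exact mul_eq_one_iff_eq_inv.mp (hA y z)
  have hC : ∀ y z : M, ρ (mul y z) = (ρ z)⁻¹ * ((ρ y)⁻¹ * φ⁻¹) := by
    intro y z
    rw [← hAinv y z]
    group
  -- ρ z * φ * ρ z is independent of z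
  have hbz : ∀ z z' : M, ρ z * φ * ρ z = ρ z' * φ * ρ z' := by
    have key : ∀ z y : M, (ρ z * φ * ρ z) y = (ρ y)⁻¹ (φ⁻¹ e) := by
      intro z y
      have h1 := congrArg (fun g : Equiv.Perm M => g e) (hC y z)
      simp only [Equiv.Perm.mul_apply] at h1
      rw [hρ (mul y z) e] at h1
      simp only [Equiv.Perm.mul_apply]
      rw [hρ z y, hφ (mul y z), h1, Equiv.Perm.coe_inv, Equiv.Perm.coe_inv, Equiv.apply_symm_apply]
    intro z z'
    apply Equiv.ext
    intro y
    rw [key z y, key z' y]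
  obtain ⟨b, hb⟩ : ∃ q : Equiv.Perm M, ∀ z, ρ z * φ * ρ z = q :=
    ⟨ρ e * φ * ρ e, fun z => hbz z e⟩
  have hK : ∀ y z : M, ρ (mul y z) = (ρ z)⁻¹ * (b⁻¹ * ρ y) := by
    intro y z
    have h2 : φ⁻¹ = ρ y * (b⁻¹ * ρ y) := by
      rw [← hb y]
      group
    rw [hC y z, h2]
    group
  have hM : b * b = φ := by
    have key : ∀ y, (φ * ρ e) y = ((ρ e)⁻¹ * (b⁻¹ * φ)) y := by
      intro y
      have h1 := congrArg (fun g : Equiv.Perm M => g e) (hK y e)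
      simp only [Equiv.Perm.mul_apply] at h1
      rw [hρ (mul y e) e, hρ y e] at h1
      simp only [Equiv.Perm.mul_apply]
      rw [hρ e y, hφ (mul y e), hφ y]
      exact h1
    have h3 : φ * ρ e = (ρ e)⁻¹ * (b⁻¹ * φ) := Equiv.ext key
    have h4 : ρ e * (φ * ρ e) = b⁻¹ * φ := by
      rw [h3]
      group
    have h5 : b = b⁻¹ * φ := by
      rw [← h4, ← hb e]
      group
    nth_rewrite 2 [h5]
    group
  have hQ2 : ∀ u, ρ (φ⁻¹ u) = b⁻¹ * (ρ e * (ρ u)⁻¹) := by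
    intro u
    have h0 : mul e (φ⁻¹ u) = u := by
      rw [← hφ (φ⁻¹ u)]
      exact Equiv.Perm.eq_inv_iff_eq.mp rfl
    have h1 := hK e (φ⁻¹ u)
    rw [h0] at h1
    rw [h1]
    group
  have hW : ∀ u, ρ (φ⁻¹ u) =
      (ρ e)⁻¹ * (b⁻¹ * ((ρ e)⁻¹ * (b⁻¹ * ((ρ (mul e e))⁻¹ * (b⁻¹ * ρ u))))) := by
    intro u
    have h1 := congrArg (fun g : Equiv.Perm M => g u) (hAinv e e)
    simp only [Equiv.Perm.mul_apply] at h1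
    rw [hρ (mul e e) u, hρ e (mul u (mul e e)), hρ e (mul (mul u (mul e e)) e)] at h1
    rw [← h1]
    rw [hK (mul (mul u (mul e e)) e) e, hK (mul u (mul e e)) e, hK u (mul e e)]
  -- all squares ρ u * ρ u coincide
  have hSQpair : ∀ u v, ρ u * ρ u = ρ v * ρ v := by
    have key : ∀ u, b * ((ρ e)⁻¹ * (b⁻¹ * ((ρ e)⁻¹ * (b⁻¹ *
        ((ρ (mul e e))⁻¹ * (b⁻¹ * (ρ u * ρ u))))))) = ρ e := by
      intro u
      have t1 : ρ e = b * (b⁻¹ * (ρ e * (ρ u)⁻¹)) * ρ u := by group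
      rw [← hQ2 u] at t1
      rw [hW u] at t1
      calc b * ((ρ e)⁻¹ * (b⁻¹ * ((ρ e)⁻¹ * (b⁻¹ *
            ((ρ (mul e e))⁻¹ * (b⁻¹ * (ρ u * ρ u)))))))
          = b * ((ρ e)⁻¹ * (b⁻¹ * ((ρ e)⁻¹ * (b⁻¹ *
            ((ρ (mul e e))⁻¹ * (b⁻¹ * ρ u)))))) * ρ u := by group
        _ = ρ e := t1.symm
    intro u v
    have h1 := (key u).trans (key v).symm
    exact mul_left_cancel (mul_left_cancel (mul_left_cancel (mul_left_cancel
      (mul_left_cancel (mul_left_cancel (mul_left_cancel h1))))))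
  obtain ⟨D, hD⟩ : ∃ q : Equiv.Perm M, ∀ u, ρ u * ρ u = q :=
    ⟨ρ e * ρ e, fun u => hSQpair u e⟩
  have hDcomm : ∀ u, D * ρ u = ρ u * D := by
    intro u
    rw [← hD u]
    group
  have hφinv : φ⁻¹ = D * ρ (mul e e) := by
    rw [← hD e]
    exact (hAinv e e).symm
  have hρk : ρ (mul e e) = D⁻¹ * φ⁻¹ := by
    rw [hφinv]
    group
  have cDφinv : φ⁻¹ * D = D * φ⁻¹ := by
    rw [hφinv, mul_assoc, ← hDcomm (mul e e)]
  have hc : φ⁻¹ * D⁻¹ = D⁻¹ * φ⁻¹ := by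
    calc φ⁻¹ * D⁻¹ = D⁻¹ * (D * φ⁻¹) * D⁻¹ := by group
      _ = D⁻¹ * (φ⁻¹ * D) * D⁻¹ := by rw [cDφinv]
      _ = D⁻¹ * φ⁻¹ := by group
  have cDφ : φ * D = D * φ := by
    calc φ * D = φ * ((D * φ⁻¹) * φ) := by group
      _ = φ * ((φ⁻¹ * D) * φ) := by rw [← cDφinv]
      _ = D * φ := by group
  have cDb : D * b = b * D := by
    rw [← hb e]
    calc D * (ρ e * φ * ρ e) = (D * ρ e) * φ * ρ e := by group
      _ = (ρ e * D) * φ * ρ e := by rw [hDcomm e]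
      _ = ρ e * (D * φ) * ρ e := by group
      _ = ρ e * (φ * D) * ρ e := by rw [← cDφ]
      _ = ρ e * φ * (D * ρ e) := by group
      _ = ρ e * φ * (ρ e * D) := by rw [hDcomm e]
      _ = ρ e * φ * ρ e * D := by group
  have X1 : φ⁻¹ = D * (D * b) := by
    have h1 := hb (mul e e)
    rw [hρk] at h1
    calc φ⁻¹ = D * (D * ((D⁻¹ * φ⁻¹) * φ * (D⁻¹ * φ⁻¹))) := by group
      _ = D * (D * b) := by rw [h1]
  have X2 : φ⁻¹ * φ⁻¹ = D * (D * D) := by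
    have h1 := hD (mul e e)
    rw [hρk] at h1
    rw [mul_assoc, ← mul_assoc φ⁻¹ D⁻¹ φ⁻¹, hc] at h1
    calc φ⁻¹ * φ⁻¹ = D * (D * (D⁻¹ * ((D⁻¹ * φ⁻¹) * φ⁻¹))) := by group
      _ = D * (D * D) := by rw [h1]
  have X3 : (D * (D * b)) * (D * (D * b)) = D * (D * D) := by
    rw [← X1]
    exact X2
  have Y1 : D * (D * (b * (b * b))) = 1 := by
    calc D * (D * (b * (b * b))) = (D * (D * b)) * (b * b) := by group
      _ = φ⁻¹ * (b * b) := by rw [← X1]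
      _ = φ⁻¹ * φ := by rw [hM]
      _ = 1 := by group
  have Y2' : b * (D * (D * b)) = D := by
    have h1 : D * (D * (b * (D * (D * b)))) = D * (D * D) := by
      calc D * (D * (b * (D * (D * b)))) = (D * (D * b)) * (D * (D * b)) := by group
        _ = D * (D * D) := X3
    exact mul_left_cancel (mul_left_cancel h1)
  have hcomm : b * (D * (D * b)) = D * (D * (b * b)) := by
    calc b * (D * (D * b)) = ((b * D) * D) * b := by group
      _ = ((D * b) * D) * b := by rw [← cDb]
      _ = (D * ((b * D) * b)) := by group
      _ = (D * ((D * b) * b)) := by rw [← cDb]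
      _ = D * (D * (b * b)) := by group
  have Y2'' : D * (b * b) = 1 := by
    have h1 : D * (D * (b * b)) = D * 1 := by
      rw [mul_one, ← hcomm]
      exact Y2'
    exact mul_left_cancel h1
  have Z1 : D * b = 1 := by
    have h1 : D * ((D * (b * b)) * b) = 1 := by
      calc D * ((D * (b * b)) * b) = D * (D * (b * (b * b))) := by group
        _ = 1 := Y1
    rw [Y2'', one_mul] at h1
    exact h1
  have hb1 : b = 1 := by
    have h1 : (D * b) * b = D * (b * b) := by group
    rw [Z1, Y2'', one_mul] at h1
    exact h1
  have hD1 : D = 1 := by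
    have h1 := Z1
    rw [hb1, mul_one] at h1
    exact h1
  have hφ1 : φ = 1 := by
    have h1 := hM
    rw [hb1, one_mul] at h1
    exact h1.symm
  -- conclusions
  have idL : ∀ x, mul e x = x := by
    intro x
    have h2 : φ x = x := by
      rw [hφ1]
      rfl
    rw [← hφ x]
    exact h2
  have hρe1 : ρ e = 1 := by
    have h1 := hρk
    rw [idL e, hD1, hφ1] at h1
    simpa using h1
  have hρself : ∀ w, (ρ w)⁻¹ = ρ w := by
    intro w
    have h1 := hD w
    rw [hD1] at h1
    exact inv_eq_of_mul_eq_one_right h1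
  have hKs : ∀ y z, ρ (mul y z) = ρ z * ρ y := by
    intro y z
    rw [hK y z, hb1, hρself z]
    group
  have assoc : ∀ x y z, mul (mul x y) z = mul x (mul y z) := by
    intro x y z
    have h1 := congrArg (fun g : Equiv.Perm M => g x) (hKs y z)
    simp only [Equiv.Perm.mul_apply] at h1
    rw [hρ (mul y z) x, hρ y x, hρ z (mul x y)] at h1
    exact h1.symm
  have comm : ∀ y z, mul y z = mul z y := by
    intro y z
    apply ρinj
    have h1 := hAinv y z
    rw [hφ1, inv_one] at h1
    have h2 := mul_eq_one_iff_eq_inv.mp h1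
    rw [hρself (mul y z)] at h2
    rw [hKs y z, hKs z y]
    exact (h2.trans (hKs y z)).symm
  have sq : ∀ x, mul x x = e := by
    intro x
    apply ρinj
    rw [hKs x x, hD x, hD1, hρe1]
  exact ⟨assoc, comm, idL, sq⟩
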